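/- Every forward slide σ = (k_0, k_1, ..., k_{r+s}) on a tabloid T has a unique decomposition σ = σ_2 ∘ σ_1 where σ_1 = (k_0,...,k_r) is a forward slide on T of length r and σ_2 = (k_0, k_{r+1}, ..., k_{r+s}) is a forward slide on σ_1 ∘ T of length s. -/

import Mathlib

open Finset

namespace NPS

/-- A tabloid of shape `μ`: a bijection from the cells of `μ` onto `{1, …, n}`,
zero outside `μ`. -/
def IsTabloid (μ : YoungDiagram) (T : ℕ × ℕ → ℕ) : Prop :=
  Set.BijOn T ↑μ.cells (Set.Icc 1 μ.card) ∧ ∀ x ∉ μ.cells, T x = 0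

/-- `b` is a right or bottom neighbour of `a`. -/
def NextCell (a b : ℕ × ℕ) : Prop := b = (a.1, a.2 + 1) ∨ b = (a.1 + 1, a.2)

/-- `ks = [k_0, …, k_r]` is (the entry list of) a forward slide on `T` at `x`:
the entries lie along a path of cells of `μ` starting at `x` and moving right or down,
`k_1 < k_2 < … < k_r`, and `k_0 > k_r` (if `r ≥ 1`).  The associated permutation is
the cycle `(k_0, …, k_r)`, i.e. `ks.formPerm`. -/
def IsForwardSlide (μ : YoungDiagram) (T : ℕ × ℕ → ℕ) (x : ℕ × ℕ) (ks : List ℕ) : Prop :=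
  ∃ c : List (ℕ × ℕ),
    c.head? = some x ∧ (∀ y ∈ c, y ∈ μ.cells) ∧
    List.Chain' NextCell c ∧ ks = c.map T ∧
    List.Chain' (· < ·) ks.tail ∧
    (1 < ks.length → ∀ m ∈ ks.getLast?, m < T x)

/-- Unique decomposition of a forward slide of length r + s into a forward slide of
length r on T followed by a forward slide of length s (starting with the same entry
k₀ = T x) on σ₁ ∘ T. -/
lemma formPerm_split {α : Type*} [DecidableEq α] (a : α) (l₁ l₂ : List α)
    (hr : l₁ ≠ []) (hs : l₂ ≠ [])
    (h : (a :: (l₁ ++ l₂)).Nodup) :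
    (a :: (l₁ ++ l₂)).formPerm = (a :: l₂).formPerm * (a :: l₁).formPerm := by
  have hr : 0 < l₁.length := List.length_pos_iff.mpr hr
  have hs : 0 < l₂.length := List.length_pos_iff.mpr hs
  rw [List.nodup_cons] at h
  obtain ⟨ha, hnd⟩ := h
  have hal₁ : a ∉ l₁ := fun hx => ha (List.mem_append.mpr (Or.inl hx))
  have hal₂ : a ∉ l₂ := fun hx => ha (List.mem_append.mpr (Or.inr hx))
  have hD : List.Disjoint l₁ l₂ := List.disjoint_of_nodup_append hnd
  have h1 : (a :: l₁).Nodup := List.nodup_cons.mpr ⟨hal₁, hnd.of_append_left⟩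
  have h2 : (a :: l₂).Nodup := List.nodup_cons.mpr ⟨hal₂, hnd.of_append_right⟩
  have h : (a :: (l₁ ++ l₂)).Nodup := List.nodup_cons.mpr ⟨ha, hnd⟩
  have hdisj : ∀ z ∈ l₂, z ∉ a :: l₁ := by
    intro z hz
    simp only [List.mem_cons, not_or]
    exact ⟨fun hza => hal₂ (hza ▸ hz), fun hzl => hD hzl hz⟩
  have hdisj' : ∀ z ∈ l₁, z ∉ a :: l₂ := by
    intro z hz
    simp only [List.mem_cons, not_or]
    exact ⟨fun hza => hal₁ (hza ▸ hz), fun hzl => hD hz hzl⟩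
  ext z
  simp only [Equiv.Perm.coe_mul, Function.comp_apply]
  by_cases hz : z ∈ a :: (l₁ ++ l₂)
  · simp only [List.mem_cons, List.mem_append] at hz
    rcases hz with hza | hz | hz
    · -- z = a
      rw [hza]
      have e1 : (a :: l₁).formPerm a = l₁[0]'hr := by
        have := List.formPerm_apply_getElem_zero (a :: l₁) h1 (by simp [hr])
        simpa using this
      have e2 : (a :: (l₁ ++ l₂)).formPerm a = l₁[0]'hr := by
        have := List.formPerm_apply_getElem_zero (a :: (l₁ ++ l₂)) h (by simp; omega)
        simp only [List.getElem_cons_zero, List.getElem_cons_succ] at this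
        rw [this, List.getElem_append_left hr]
      rw [e2, e1, List.formPerm_apply_of_notMem (hdisj' _ (List.getElem_mem hr))]
    · -- z ∈ l₁
      obtain ⟨j, hj, rfl⟩ := List.getElem_of_mem hz
      have hmem1 : l₁[j] = (a :: l₁)[j+1]'(by simpa using hj) := by simp
      have hmemL : l₁[j] = (a :: (l₁ ++ l₂))[j+1]'(by simp; omega) := by
        simp [List.getElem_append_left, hj]
      by_cases hjr : j + 1 < l₁.length
      · have e1 : (a :: l₁).formPerm l₁[j] = l₁[j+1]'hjr := by
          rw [hmem1, List.formPerm_apply_getElem _ h1 (j+1) (by simpa using hj)]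
          simp only [List.length_cons]
          simp only [show (j+1+1) % (l₁.length+1) = j+2 from Nat.mod_eq_of_lt (by omega)]
          simp
        have eL : (a :: (l₁ ++ l₂)).formPerm l₁[j] = l₁[j+1]'hjr := by
          rw [hmemL, List.formPerm_apply_getElem _ h (j+1) (by simp; omega)]
          simp only [List.length_cons, List.length_append]
          simp only [show (j+1+1) % (l₁.length+l₂.length+1) = j+2 from Nat.mod_eq_of_lt (by omega)]
          simp only [List.getElem_cons_succ]
          rw [List.getElem_append_left hjr]
        rw [eL, e1, List.formPerm_apply_of_notMem (hdisj' _ (List.getElem_mem hjr))]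
      · -- j + 1 = l₁.length : last of l₁
        have hj1 : j + 1 = l₁.length := by omega
        have e1 : (a :: l₁).formPerm l₁[j] = a := by
          rw [hmem1, List.formPerm_apply_getElem _ h1 (j+1) (by simpa using hj)]
          simp only [List.length_cons]
          simp only [show (j+1+1) % (l₁.length+1) = 0 from by rw [← hj1]; exact Nat.mod_self _]
          simp
        have e2 : (a :: l₂).formPerm a = l₂[0]'hs := by
          have := List.formPerm_apply_getElem_zero (a :: l₂) h2 (by simp [hs])
          simpa using this
        have eL : (a :: (l₁ ++ l₂)).formPerm l₁[j] = l₂[0]'hs := by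
          rw [hmemL, List.formPerm_apply_getElem _ h (j+1) (by simp; omega)]
          simp only [List.length_cons, List.length_append]
          simp only [show (j+1+1) % (l₁.length+l₂.length+1) = l₁.length+1 from by
            rw [Nat.mod_eq_of_lt (by omega)]; omega]
          simp only [List.getElem_cons_succ]
          rw [List.getElem_append_right (by omega)]
          simp
        rw [eL, e1, e2]
    · -- z ∈ l₂
      obtain ⟨j, hj, rfl⟩ := List.getElem_of_mem hz
      have e0 : (a :: l₁).formPerm l₂[j] = l₂[j] :=
        List.formPerm_apply_of_notMem (hdisj _ (List.getElem_mem hj))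
      have hmem2 : l₂[j] = (a :: l₂)[j+1]'(by simpa using hj) := by simp
      have hmemL : l₂[j] = (a :: (l₁ ++ l₂))[l₁.length + j + 1]'(by simp; omega) := by
        simp only [List.getElem_cons_succ]
        rw [List.getElem_append_right (by omega)]
        congr 1
        omega
      by_cases hjs : j + 1 < l₂.length
      · have e2 : (a :: l₂).formPerm l₂[j] = l₂[j+1]'hjs := by
          rw [hmem2, List.formPerm_apply_getElem _ h2 (j+1) (by simpa using hj)]
          simp only [List.length_cons]
          simp only [show (j+1+1) % (l₂.length+1) = j+2 from Nat.mod_eq_of_lt (by omega)]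
          simp
        have eL : (a :: (l₁ ++ l₂)).formPerm l₂[j] = l₂[j+1]'hjs := by
          rw [hmemL, List.formPerm_apply_getElem _ h (l₁.length + j + 1) (by simp; omega)]
          simp only [List.length_cons, List.length_append]
          simp only [show (l₁.length+j+1+1) % (l₁.length+l₂.length+1) = l₁.length+j+2 from
            Nat.mod_eq_of_lt (by omega)]
          simp only [List.getElem_cons_succ]
          rw [List.getElem_append_right (by omega)]
          congr 1
          omega
        rw [eL, e0, e2]
      · have hj1 : j + 1 = l₂.length := by omega
        have e2 : (a :: l₂).formPerm l₂[j] = a := by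
          rw [hmem2, List.formPerm_apply_getElem _ h2 (j+1) (by simpa using hj)]
          simp only [List.length_cons]
          simp only [show (j+1+1) % (l₂.length+1) = 0 from by rw [← hj1]; exact Nat.mod_self _]
          simp
        have eL : (a :: (l₁ ++ l₂)).formPerm l₂[j] = a := by
          rw [hmemL, List.formPerm_apply_getElem _ h (l₁.length + j + 1) (by simp; omega)]
          simp only [List.length_cons, List.length_append]
          simp only [show (l₁.length+j+1+1) % (l₁.length+l₂.length+1) = 0 from by
            have he : l₁.length + j + 1 + 1 = l₁.length + l₂.length + 1 := by omega
            rw [he]; exact Nat.mod_self _]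
          simp
        rw [eL, e0, e2]
  · have hz1 : z ∉ a :: l₁ := by
      simp only [List.mem_cons, List.mem_append] at hz ⊢; tauto
    have hz2 : z ∉ a :: l₂ := by
      simp only [List.mem_cons, List.mem_append] at hz ⊢; tauto
    rw [List.formPerm_apply_of_notMem hz, List.formPerm_apply_of_notMem hz1,
      List.formPerm_apply_of_notMem hz2]


lemma rotated_eq_of_head?_eq {α : Type*} {l l' : List α} (hn : l.Nodup)
    (hrot : l ~r l') (hh : l.head? = l'.head?) : l = l' := by
  obtain ⟨n, rfl⟩ := hrot
  rcases l with _ | ⟨a, t⟩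
  · simp
  set l := a :: t with hl
  have hpos : 0 < l.length := by simp [hl]
  have hmod : n % l.length < l.length := Nat.mod_lt _ hpos
  have h1 : (l.rotate n).head? = some (l[n % l.length]'hmod) := by
    rw [← List.rotate_mod, List.head?_rotate hmod, List.getElem?_eq_getElem hmod]
  have h0 : l.head? = some (l[0]'hpos) := by simp [hl]
  rw [h0, h1, Option.some_inj] at hh
  have := (List.Nodup.getElem_inj_iff hn).mp hh.symm
  rw [← List.rotate_mod, this, List.rotate_zero]

lemma pairwise_le_getLast {l : List ℕ} (hp : l.Pairwise (· < ·)) {a : ℕ}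
    (ha : l.getLast? = some a) : ∀ z ∈ l, z ≤ a := by
  intro z hz
  have hd := List.dropLast_append_getLast? a ha
  rw [← hd] at hp hz
  rw [List.pairwise_append] at hp
  rcases List.mem_append.mp hz with h1 | h2
  · exact le_of_lt (hp.2.2 z h1 a (List.mem_singleton_self a))
  · rw [List.mem_singleton] at h2
    omega

lemma slide_facts {μ : YoungDiagram} {T : ℕ × ℕ → ℕ} {x : ℕ × ℕ} {ks : List ℕ}
    (h : IsForwardSlide μ T x ks) :
    ks.head? = some (T x) ∧ ks.tail.Pairwise (· < ·) ∧ (∀ z ∈ ks.tail, z < T x) := by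
  obtain ⟨c, h1, h2, h3, h4, h5, h6⟩ := h
  have hhead : ks.head? = some (T x) := by rw [h4, List.head?_map, h1]; rfl
  have hp : ks.tail.Pairwise (· < ·) := List.isChain_iff_pairwise.mp h5
  refine ⟨hhead, hp, ?_⟩
  intro z hz
  have hne : ks.tail ≠ [] := List.ne_nil_of_mem hz
  rcases ks with _ | ⟨k, t⟩
  · simp at hhead
  simp only [List.tail_cons] at hp hz hne ⊢
  rcases t with _ | ⟨b, t'⟩
  · simp at hne
  have hlen : 1 < (k :: b :: t').length := by simp
  obtain ⟨w, hw⟩ := Option.isSome_iff_exists.mp (List.getLast?_isSome.mpr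
    (show (b :: t') ≠ [] by simp))
  have hwx : w < T x := h6 hlen w (by rw [List.getLast?_cons_cons]; exact hw)
  have := pairwise_le_getLast hp hw z hz
  omega

lemma formPerm_split' {α : Type*} [DecidableEq α] (a : α) (l₁ l₂ : List α)
    (h : (a :: (l₁ ++ l₂)).Nodup) :
    (a :: (l₁ ++ l₂)).formPerm = (a :: l₂).formPerm * (a :: l₁).formPerm := by
  rcases eq_or_ne l₁ [] with rfl | hr
  · simp [List.formPerm_singleton]
  rcases eq_or_ne l₂ [] with rfl | hs
  · simp [List.formPerm_singleton]
  exact formPerm_split a l₁ l₂ hr hs h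

theorem stmt11 (μ : YoungDiagram) (T : ℕ × ℕ → ℕ) (hT : IsTabloid μ T)
    (x : ℕ × ℕ) (ks : List ℕ) (r s : ℕ) (hlen : ks.length = r + s + 1)
    (hks : IsForwardSlide μ T x ks) :
    ∃! p : List ℕ × List ℕ,
      p.1.length = r + 1 ∧ p.2.length = s + 1 ∧
      p.2.head? = some (T x) ∧
      IsForwardSlide μ T x p.1 ∧
      (∃ y : ℕ × ℕ, IsForwardSlide μ (⇑p.1.formPerm ∘ T) y p.2) ∧
      ks.formPerm = p.2.formPerm * p.1.formPerm := by
  classical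
  obtain ⟨hhead, hp, hlt⟩ := slide_facts hks
  obtain ⟨c, hc_head, hc_mem, hc_chain, hmap, hsorted, hlast⟩ := hks
  set m := T x with hm
  obtain ⟨tl, rfl⟩ : ∃ tl, ks = m :: tl := by
    rcases ks with _ | ⟨a, t⟩
    · simp at hhead
    · exact ⟨t, by simpa using hhead⟩
  simp only [List.tail_cons] at hp hlt
  have htl_len : tl.length = r + s := by simpa using hlen
  have htl_lt : ∀ z ∈ tl, z < m := hlt
  have hnd : (m :: tl).Nodup :=
    List.nodup_cons.mpr ⟨fun h => lt_irrefl m (htl_lt m h), hp.nodup⟩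
  have hc_len : c.length = r + s + 1 := by
    have := congrArg List.length hmap
    simp only [List.length_map] at this
    omega
  obtain ⟨ctl, rfl⟩ : ∃ ctl, c = x :: ctl := by
    rcases c with _ | ⟨a, t⟩
    · simp at hc_head
    · exact ⟨t, by simpa using hc_head⟩
  -- cross facts between take and drop of tl
  have hTD : ∀ w ∈ tl.take r, ∀ z ∈ tl.drop r, w < z := by
    have := hp
    rw [← List.take_append_drop r tl, List.pairwise_append] at this
    exact this.2.2
  have hdropmem : ∀ z ∈ tl.drop r, z ∉ m :: tl.take r := by
    intro z hz
    simp only [List.mem_cons, not_or]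
    refine ⟨fun h => absurd (htl_lt z (List.drop_subset _ _ hz)) (by omega), fun h => ?_⟩
    exact lt_irrefl z (hTD z h z hz)
  have hctl_len : ctl.length = r + s := by simpa using hc_len
  have hrlt : r < (m :: tl).length := by simp; omega
  have hrlt' : r < (x :: ctl).length := by simp; omega
  have hrlt'' : r < ((x :: ctl).map T).length := by simp; omega
  -- key : formPerm of P1 sends ks[r] to m
  have hTcr : T ((x :: ctl)[r]'hrlt') = (m :: tl)[r]'hrlt := by
    simp only [hmap, List.getElem_map]
  have hkey : (m :: tl.take r).formPerm ((m :: tl)[r]'hrlt) = m := by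
    rcases Nat.eq_zero_or_pos r with rfl | hrpos
    · simp [List.formPerm_singleton]
    · have hgl : (m :: tl.take r).getLast (List.cons_ne_nil _ _) = (m :: tl)[r]'hrlt := by
        rw [List.getLast_eq_getElem]
        rcases r with _ | r'
        · omega
        · simp only [List.length_cons, List.length_take]
          have h1 : min (r' + 1) tl.length = r' + 1 := by omega
          simp only [h1, Nat.add_sub_cancel, List.getElem_cons_succ]
          rw [List.getElem_take]
      rw [← hgl, List.formPerm_apply_getLast]
  have hP1nd : (m :: tl.take r).Nodup := by
    refine List.nodup_cons.mpr ⟨fun h => ?_, hp.sublist (List.take_sublist _ _) |>.nodup⟩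
    · exact lt_irrefl m (htl_lt m (List.take_subset _ _ h))
  have hP2map : ((x :: ctl).drop r).map (⇑(m :: tl.take r).formPerm ∘ T) = m :: tl.drop r := by
    rw [show ((x :: ctl).drop r).map (⇑(m :: tl.take r).formPerm ∘ T)
        = (((x :: ctl).drop r).map T).map ⇑(m :: tl.take r).formPerm by rw [List.map_map]]
    rw [List.map_drop, ← hmap]
    rw [List.drop_eq_getElem_cons hrlt, List.drop_succ_cons, List.map_cons, hkey]
    congr 1
    simpa using List.map_congr_left fun z hz =>
      List.formPerm_apply_of_notMem (hdropmem z hz)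
  -- candidate pair
  refine ⟨(m :: tl.take r, m :: tl.drop r), ⟨?_, ?_, rfl, ?_, ?_, ?_⟩, ?_⟩
  · simp; omega
  · simp; omega
  · -- first slide
    refine ⟨(x :: ctl).take (r+1), by simp, fun y hy => hc_mem y (List.take_subset _ _ hy),
      hc_chain.take _, ?_, ?_, ?_⟩
    · rw [List.map_take, ← hmap, List.take_succ_cons]
    · exact (show List.IsChain (· < ·) (tl.take r) by simpa using hsorted.take r)
    · intro h1 m' hm'
      have hrpos : 0 < r := by
        simp only [List.length_cons, List.length_take] at h1
        omega
      rw [Option.mem_def] at hm'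
      rcases hq : tl.take r with _ | ⟨w, ws⟩
      · exfalso
        have h0 : (tl.take r).length = min r tl.length := List.length_take
        rw [hq] at h0
        simp only [List.length_nil] at h0
        omega
      · rw [hq, List.getLast?_cons_cons] at hm'
        have hmem : m' ∈ tl.take r := by
          rw [hq]
          exact List.mem_of_getLast? hm'
        exact htl_lt m' (List.take_subset _ _ hmem)
  · -- second slide
    refine ⟨(x :: ctl)[r]'hrlt', (x :: ctl).drop r, ?_,
      fun y hy => hc_mem y (List.drop_subset _ _ hy), hc_chain.drop _, hP2map.symm, ?_, ?_⟩
    · rw [List.drop_eq_getElem_cons hrlt']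
      rfl
    · exact hsorted.drop r
    · intro h1 m' hm'
      simp only [Function.comp_apply, hTcr, hkey]
      have hspos : 0 < s := by
        simp only [List.length_cons, List.length_drop] at h1
        omega
      rw [Option.mem_def] at hm'
      rcases hq : tl.drop r with _ | ⟨w, ws⟩
      · exfalso
        have h0 : (tl.drop r).length = tl.length - r := List.length_drop
        rw [hq] at h0
        simp only [List.length_nil] at h0
        omega
      · rw [hq, List.getLast?_cons_cons] at hm'
        have hmem : m' ∈ tl.drop r := by
          rw [hq]
          exact List.mem_of_getLast? hm'
        exact htl_lt m' (List.drop_subset _ _ hmem)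
  · -- product
    conv_lhs => rw [show (m :: tl) = m :: (tl.take r ++ tl.drop r) by rw [List.take_append_drop]]
    exact formPerm_split' m _ _ (by rw [List.take_append_drop]; exact hnd)
  · -- uniqueness
    rintro ⟨L1, L2⟩ ⟨hq1, hq2, hq3, hq4, hq5, hq6⟩
    obtain ⟨hL1h, hL1p, hL1lt⟩ := slide_facts hq4
    obtain ⟨y, hy⟩ := hq5
    obtain ⟨hL2h, hL2p, hL2lt⟩ := slide_facts hy
    simp only at hq1 hq2 hq3 hq6
    obtain ⟨A, rfl⟩ : ∃ A, L1 = m :: A := by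
      rcases L1 with _ | ⟨a, t⟩
      · simp at hL1h
      · exact ⟨t, by simpa using hL1h⟩
    obtain ⟨B, rfl⟩ : ∃ B, L2 = m :: B := by
      rcases L2 with _ | ⟨a, t⟩
      · simp at hq3
      · exact ⟨t, by simpa [hm] using hq3⟩
    simp only [List.tail_cons] at hL1p hL1lt hL2p hL2lt
    have hAlen : A.length = r := by simpa using hq1
    have hBlen : B.length = s := by simpa using hq2
    have hAlt : ∀ z ∈ A, z < m := hL1lt
    have hym : (⇑(m :: A).formPerm ∘ T) y = m := by
      rw [hL2h] at hq3
      simpa [hm] using hq3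
    have hBlt : ∀ z ∈ B, z < m := by
      intro z hz
      have := hL2lt z hz
      rwa [hym] at this
    rcases Nat.eq_zero_or_pos (r + s) with hrs0 | hrspos
    · have hr0 : r = 0 := by omega
      have hs0 : s = 0 := by omega
      have hA : A = [] := List.length_eq_zero_iff.mp (by omega)
      have hB : B = [] := List.length_eq_zero_iff.mp (by omega)
      have htl0 : tl = [] := List.length_eq_zero_iff.mp (by omega)
      subst hA hB
      simp [hr0, hs0, htl0]
    -- general case
    have hANodup : A.Nodup := hL1p.nodup
    have hBNodup : B.Nodup := hL2p.nodup
    have hsub : ∀ z ∈ tl, z ∈ A ∨ z ∈ B := by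
      intro z hz
      by_contra hcon
      push_neg at hcon
      have hz1 : z ∉ m :: A := by
        simp only [List.mem_cons, not_or]
        exact ⟨fun h => absurd (htl_lt z hz) (by omega), hcon.1⟩
      have hz2 : z ∉ m :: B := by
        simp only [List.mem_cons, not_or]
        exact ⟨fun h => absurd (htl_lt z hz) (by omega), hcon.2⟩
      have hfix : ((m :: B).formPerm * (m :: A).formPerm) z = z := by
        simp only [Equiv.Perm.coe_mul, Function.comp_apply]
        rw [List.formPerm_apply_of_notMem hz1, List.formPerm_apply_of_notMem hz2]
      have hne : (m :: tl).formPerm z ≠ z := by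
        rw [List.formPerm_apply_mem_ne_self_iff _ hnd z (List.mem_cons_of_mem m hz)]
        simp
        omega
      rw [hq6, hfix] at hne
      exact hne rfl
    -- finset cardinality argument
    have hsubF : tl.toFinset ⊆ A.toFinset ∪ B.toFinset := by
      intro z hz
      rw [List.mem_toFinset] at hz
      rcases hsub z hz with h | h
      · exact Finset.mem_union_left _ (List.mem_toFinset.mpr h)
      · exact Finset.mem_union_right _ (List.mem_toFinset.mpr h)
    have hcardtl : tl.toFinset.card = r + s := by
      rw [List.toFinset_card_of_nodup hp.nodup, htl_len]
    have hcardA : A.toFinset.card = r := by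
      rw [List.toFinset_card_of_nodup hANodup, hAlen]
    have hcardB : B.toFinset.card = s := by
      rw [List.toFinset_card_of_nodup hBNodup, hBlen]
    have hcard_union_le : (A.toFinset ∪ B.toFinset).card ≤ r + s := by
      calc (A.toFinset ∪ B.toFinset).card ≤ A.toFinset.card + B.toFinset.card :=
            Finset.card_union_le _ _
        _ = r + s := by rw [hcardA, hcardB]
    have hUnionEq : tl.toFinset = A.toFinset ∪ B.toFinset :=
      Finset.eq_of_subset_of_card_le hsubF (by omega)
    have hinter : A.toFinset ∩ B.toFinset = ∅ := by
      have h1 : (A.toFinset ∪ B.toFinset).card + (A.toFinset ∩ B.toFinset).card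
          = A.toFinset.card + B.toFinset.card := Finset.card_union_add_card_inter _ _
      rw [← hUnionEq, hcardtl, hcardA, hcardB] at h1
      exact Finset.card_eq_zero.mp (by omega)
    have hdisjAB : A.Disjoint B := by
      intro z hz hz2
      have : z ∈ A.toFinset ∩ B.toFinset :=
        Finset.mem_inter.mpr ⟨List.mem_toFinset.mpr hz, List.mem_toFinset.mpr hz2⟩
      rw [hinter] at this
      exact absurd this (Finset.notMem_empty z)
    have hndAB : (m :: (A ++ B)).Nodup := by
      rw [List.nodup_cons, List.nodup_append]
      refine ⟨fun h => ?_, hANodup, hBNodup, fun a ha b hb hab => hdisjAB ha (hab ▸ hb)⟩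
      rcases List.mem_append.mp h with h | h
      · exact absurd (hAlt m h) (lt_irrefl m)
      · exact absurd (hBlt m h) (lt_irrefl m)
    have hperm : (m :: (A ++ B)).formPerm = (m :: tl).formPerm := by
      rw [formPerm_split' m A B hndAB, ← hq6]
    rcases (List.formPerm_eq_formPerm_iff hndAB hnd).mp hperm with hrot | ⟨_, h2⟩
    · have heq := rotated_eq_of_head?_eq hndAB hrot rfl
      have hAB : A ++ B = tl := by simpa using heq
      have hA : A = tl.take r := by rw [← hAB, List.take_left' hAlen]
      have hB : B = tl.drop r := by rw [← hAB, List.drop_left' hAlen]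
      rw [hA, hB]
    · exfalso
      simp only [List.length_cons] at h2
      omega


end NPS
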